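/- Let H be a self-similar subgroup of the automorphism group of the infinite rooted binary tree. If some element of H has a stable cycle (in particular, if H contains a settled element), then H contains an odometer. -/

import Mathlib

namespace BinTree

/-- Vertices of the infinite rooted binary tree: finite words over `{0,1}`. -/
abbrev Vertex : Type := List Bool

/-- A function on vertices is a tree automorphism function if it preserves lengths
(levels) and prefixes. -/
def IsTreeAutFun (f : Vertex → Vertex) : Prop :=
  (∀ v, (f v).length = v.length) ∧ ∀ v w : Vertex, (f (v ++ w)).take v.length = f v

/-- `Ω`: the automorphism group of the infinite rooted binary tree, realized as the
subgroup of permutations of the set of vertices preserving the tree structure. -/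
def TreeAut : Subgroup (Equiv.Perm Vertex) where
  carrier := {e | IsTreeAutFun ⇑e}
  one_mem' := ⟨fun _ => rfl, fun v w => by
    simpa using List.take_left (l₁ := v) (l₂ := w)⟩
  mul_mem' := by
    rintro a b ha hb
    obtain ⟨ha1, ha2⟩ := ha
    obtain ⟨hb1, hb2⟩ := hb
    refine ⟨fun v => ?_, fun v w => ?_⟩
    · simp [Equiv.Perm.mul_apply, ha1, hb1]
    · have hb' : b (v ++ w) = b v ++ (b (v ++ w)).drop v.length := by
        conv_lhs => rw [← List.take_append_drop v.length (b (v ++ w)), hb2]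
      have hlen : (b v).length = v.length := hb1 v
      calc ((a * b) (v ++ w)).take v.length
          = (a (b v ++ (b (v ++ w)).drop v.length)).take v.length := by
            rw [Equiv.Perm.mul_apply, ← hb']
        _ = a (b v) := by rw [← hlen]; exact ha2 _ _
        _ = (a * b) v := rfl
  inv_mem' := by
    intro a ha
    obtain ⟨ha1, ha2⟩ := ha
    show IsTreeAutFun ⇑a⁻¹
    have hlen : ∀ v : Vertex, (a⁻¹ v).length = v.length := by
      intro v
      have h := ha1 (a⁻¹ v)
      rw [show ∀ x, a (a⁻¹ x) = x from fun x => a.apply_symm_apply x] at h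
      exact h.symm ▸ rfl
    refine ⟨hlen, fun v w => ?_⟩
    have htl : ((a⁻¹ (v ++ w)).take v.length).length = v.length := by
      rw [List.length_take, hlen, List.length_append]
      omega
    have key : a ((a⁻¹ (v ++ w)).take v.length) = v := by
      have h2 := ha2 ((a⁻¹ (v ++ w)).take v.length) ((a⁻¹ (v ++ w)).drop v.length)
      rw [List.take_append_drop, htl, show ∀ x, a (a⁻¹ x) = x from fun x => a.apply_symm_apply x] at h2
      rw [← h2]
      simpa using List.take_left (l₁ := v) (l₂ := w)
    have h3 := congrArg (⇑a⁻¹) key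
    rwa [show ∀ x, a⁻¹ (a x) = x from fun x => a.symm_apply_apply x] at h3

/-- wreath recursion, forward map: `(g,h)σᵗ` -/
def wrFun (g h : Vertex → Vertex) (t : Bool) : Vertex → Vertex
  | [] => []
  | x :: v => (xor x t) :: (cond x (h v) (g v))

/-- wreath recursion, inverse map -/
def wrFunInv (g h : Vertex → Vertex) (t : Bool) : Vertex → Vertex
  | [] => []
  | y :: w => (xor y t) :: (cond (xor y t) (h w) (g w))

/-- `(g,h)σᵗ` as a permutation of the vertices. -/
def wrPerm (g h : Equiv.Perm Vertex) (t : Bool) : Equiv.Perm Vertex where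
  toFun := wrFun ⇑g ⇑h t
  invFun := wrFunInv ⇑g.symm ⇑h.symm t
  left_inv := by
    intro v
    cases v with
    | nil => rfl
    | cons x v => cases x <;> cases t <;> simp [wrFun, wrFunInv]
  right_inv := by
    intro v
    cases v with
    | nil => rfl
    | cons x v => cases x <;> cases t <;> simp [wrFun, wrFunInv]

/-- The element `(g,h)σᵗ` of `Ω`: acts on the first level by `σᵗ` (where `σ` is the
swap of the two level-one subtrees), with section `g` at the vertex `0` and section
`h` at the vertex `1`.  Thus `(γ₀,γ₁)τ` of the wreath recursion
`Ω ≃ (Ω × Ω) ⋊ S₂` is `wr γ₀ γ₁ t` (`t = true` iff `τ = σ`). -/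
def wr (g h : TreeAut) (t : Bool) : TreeAut :=
  ⟨wrPerm g.1 h.1 t, by
    have hg : IsTreeAutFun ⇑g.1 := g.2
    have hh : IsTreeAutFun ⇑h.1 := h.2
    constructor
    · intro v
      cases v with
      | nil => rfl
      | cons x v =>
        cases x <;> simp [wrPerm, wrFun, hg.1, hh.1]
    · intro v w
      cases v with
      | nil => simp [wrPerm, wrFun]
      | cons x v =>
        cases x <;> simp [wrPerm, wrFun, hg.2, hh.2]⟩

/-- Application of a tree automorphism to a vertex. -/
def ap (γ : TreeAut) (v : Vertex) : Vertex := γ.1 v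

/-- The permutation induced by `γ ∈ Ω` on level `n` of the tree. -/
def levelPerm (n : ℕ) (γ : TreeAut) : Equiv.Perm (List.Vector Bool n) where
  toFun v := ⟨γ.1 v.1, by
    have h : IsTreeAutFun ⇑γ.1 := γ.2
    rw [h.1 v.1]; exact v.2⟩
  invFun v := ⟨γ.1.symm v.1, by
    have h : IsTreeAutFun ⇑γ.1 := γ.2
    have h2 := h.1 (γ.1.symm v.1)
    rw [Equiv.apply_symm_apply] at h2
    exact h2.symm.trans v.2⟩
  left_inv v := Subtype.ext (Equiv.symm_apply_apply _ _)
  right_inv v := Subtype.ext (Equiv.apply_symm_apply _ _)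

/-- Restriction to level `n` as a group homomorphism. -/
def levelHom (n : ℕ) : TreeAut →* Equiv.Perm (List.Vector Bool n) where
  toFun := levelPerm n
  map_one' := Equiv.ext fun v => Subtype.ext rfl
  map_mul' := fun g h => Equiv.ext fun v => Subtype.ext rfl

/-- `sgn_n`: the sign of the permutation induced on level `n`. -/
def sgn (n : ℕ) (γ : TreeAut) : ℤˣ := Equiv.Perm.sign (levelPerm n γ)

/-- An odometer: acts as a single `2^n`-cycle on each level `n ≥ 1`. -/
def IsOdometer (γ : TreeAut) : Prop :=
  ∀ n : ℕ, 1 ≤ n → (levelPerm n γ).IsCycle ∧ (levelPerm n γ).support = Finset.univ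

/-- The profinite topology on `Ω`: the coarsest topology making all level
restrictions (to the discrete finite groups) continuous. -/
instance : TopologicalSpace TreeAut :=
  ⨅ n : ℕ, TopologicalSpace.induced (levelPerm n) ⊥

/-- A vertex `w` is in a stable cycle of `γ` of length `k`: its `γ`-orbit has exactly
`k` elements, and for every level `m` above the level of `w`, all level-`m` vertices
lying above this orbit are in one single `γ`-cycle (necessarily of length
`2^(m - n) * k`, which we record via the periodicity condition). -/
def InStableCycle (γ : TreeAut) (w : Vertex) (k : ℕ) : Prop :=
  0 < k ∧ ap (γ ^ k) w = w ∧ (∀ j : ℕ, 0 < j → j < k → ap (γ ^ j) w ≠ w) ∧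
  (∀ u : Vertex, w.length < u.length → (∃ i : ℕ, u.take w.length = ap (γ ^ i) w) →
    (ap (γ ^ (2 ^ (u.length - w.length) * k)) u = u ∧
      ∀ u' : Vertex, u'.length = u.length →
        (∃ i : ℕ, u'.take w.length = ap (γ ^ i) w) → ∃ j : ℕ, ap (γ ^ j) u = u'))

/-- Self-similar subgroup: closed under taking sections (here the section of `γ` at
the first-level vertex `x` is characterized by `(xv)γ = (x)γ ⬝ (v)γₓ`). -/
def SelfSimilar (H : Subgroup TreeAut) : Prop :=
  ∀ γ ∈ H, ∀ x : Bool, ∀ δ : TreeAut,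
    (∀ v : Vertex, ap γ (x :: v) = ap γ [x] ++ ap δ v) → δ ∈ H


/-! ### Auxiliary lemmas -/

lemma ap_mul (a b : TreeAut) (v : Vertex) : ap (a * b) v = ap a (ap b v) := rfl

lemma ap_one (v : Vertex) : ap 1 v = v := rfl

lemma ap_length (γ : TreeAut) (v : Vertex) : (ap γ v).length = v.length := γ.2.1 v

lemma ap_take (γ : TreeAut) (v u : Vertex) :
    (ap γ (v ++ u)).take v.length = ap γ v := γ.2.2 v u

lemma ap_split (γ : TreeAut) (v u : Vertex) :
    ap γ (v ++ u) = ap γ v ++ (ap γ (v ++ u)).drop v.length := by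
  conv_lhs => rw [← List.take_append_drop v.length (ap γ (v ++ u)), ap_take]

lemma ap_inv_ap (γ : TreeAut) (v : Vertex) : ap γ⁻¹ (ap γ v) = v := by
  simp [ap]

/-- The section of a tree automorphism at a vertex. -/
def sec (γ : TreeAut) (v : Vertex) : TreeAut := by
  refine ⟨⟨fun u => (ap γ (v ++ u)).drop v.length,
    fun u => (ap γ⁻¹ (ap γ v ++ u)).drop v.length, ?_, ?_⟩, ?_, ?_⟩
  · intro u
    simp only
    rw [← ap_split, ap_inv_ap, List.drop_left]
  · intro u
    simp only
    have h1 : ap γ⁻¹ (ap γ v ++ u)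
        = v ++ (ap γ⁻¹ (ap γ v ++ u)).drop v.length := by
      conv_lhs => rw [ap_split γ⁻¹ (ap γ v) u, ap_inv_ap]
      rw [ap_length]
    rw [← h1]
    have h2 : ap γ (ap γ⁻¹ (ap γ v ++ u)) = ap γ v ++ u := by simp [ap]
    rw [h2]
    rw [List.drop_append_of_le_length (by rw [ap_length]),
      List.drop_eq_nil_of_le (by rw [ap_length]), List.nil_append]
  · intro u
    show ((ap γ (v ++ u)).drop v.length).length = u.length
    simp only [List.length_drop, ap_length, List.length_append]
    omega
  · intro u u'
    show ((ap γ (v ++ (u ++ u'))).drop v.length).take u.length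
        = (ap γ (v ++ u)).drop v.length
    have h1 : v ++ (u ++ u') = (v ++ u) ++ u' := by rw [List.append_assoc]
    rw [h1, ap_split γ (v ++ u) u']
    rw [List.drop_append_of_le_length (by rw [ap_length, List.length_append]; omega)]
    rw [List.take_append_of_le_length (by
      simp [List.length_drop, ap_length, List.length_append])]
    congr 1
    have : u.length = ((ap γ (v ++ u)).drop v.length).length := by
      simp [List.length_drop, ap_length, List.length_append]
    rw [this, List.take_length]

lemma ap_sec (γ : TreeAut) (v u : Vertex) :
    ap γ (v ++ u) = ap γ v ++ ap (sec γ v) u := ap_split γ v u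

lemma sec_nil (γ : TreeAut) : sec γ [] = γ := by
  apply Subtype.ext; apply Equiv.coe_fn_injective; funext u
  simp [sec, ap]

lemma sec_cons (γ : TreeAut) (x : Bool) (v : Vertex) :
    sec γ (x :: v) = sec (sec γ [x]) v := by
  apply Subtype.ext; apply Equiv.coe_fn_injective; funext u
  show (ap γ ((x :: v) ++ u)).drop (x :: v).length
      = (ap (sec γ [x]) (v ++ u)).drop v.length
  show (ap γ ((x :: v) ++ u)).drop (x :: v).length
      = ((ap γ ([x] ++ (v ++ u))).drop [x].length).drop v.length
  rw [List.drop_drop]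
  congr 1 <;> simp [Nat.add_comm]

lemma sec_mem (H : Subgroup TreeAut) (hss : SelfSimilar H) :
    ∀ v : Vertex, ∀ γ ∈ H, sec γ v ∈ H := by
  intro v
  induction v with
  | nil => intro γ hγ; rwa [sec_nil]
  | cons x v ih =>
    intro γ hγ
    have h1 : sec γ [x] ∈ H := by
      refine hss γ hγ x (sec γ [x]) fun u => ?_
      have := ap_sec γ [x] u
      simpa using this
    rw [sec_cons]
    exact ih _ h1

lemma ap_pow_sec (g : TreeAut) (w : Vertex) (hw : ap g w = w) :
    ∀ (j : ℕ) (u : Vertex), ap (g ^ j) (w ++ u) = w ++ ap ((sec g w) ^ j) u := by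
  intro j
  induction j with
  | zero => intro u; simp [pow_zero, ap_one]
  | succ j ih =>
    intro u
    rw [pow_succ, ap_mul, ap_sec g w u, hw, ih, pow_succ, ap_mul]

lemma k_dvd_of_fix (γ : TreeAut) (w : Vertex) (k : ℕ) (hk : 0 < k)
    (hfix : ap (γ ^ k) w = w) (hmin : ∀ j, 0 < j → j < k → ap (γ ^ j) w ≠ w)
    (j : ℕ) (hj : ap (γ ^ j) w = w) : k ∣ j := by
  have hq : ∀ q, ap ((γ ^ k) ^ q) w = w := by
    intro q
    induction q with
    | zero => simp [pow_zero, ap_one]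
    | succ q ih => rw [pow_succ, ap_mul, hfix, ih]
  have hr : ap (γ ^ (j % k)) w = w := by
    have hpow : γ ^ j = γ ^ (j % k) * (γ ^ k) ^ (j / k) := by
      rw [← pow_mul, ← pow_add, Nat.mod_add_div]
    rw [hpow, ap_mul, hq] at hj
    exact hj
  rcases Nat.eq_zero_or_pos (j % k) with h | h
  · exact Nat.dvd_of_mod_eq_zero h
  · exact absurd hr (hmin _ h (Nat.mod_lt _ hk))

/-- a self-similar subgroup containing an element with a stable
cycle contains an odometer. -/
theorem self_similar_with_stable_cycle_has_odometer (H : Subgroup TreeAut)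
    (hss : SelfSimilar H) (γ : TreeAut) (hγ : γ ∈ H) (w : Vertex) (k : ℕ)
    (hst : InStableCycle γ w k) :
    ∃ δ ∈ H, IsOdometer δ := by
  obtain ⟨hk, hfix, hmin, hstab⟩ := hst
  refine ⟨sec (γ ^ k) w, sec_mem H hss w _ (pow_mem hγ k), ?_⟩
  set δ := sec (γ ^ k) w with hδ
  intro n hn
  -- transitivity of δ on level n
  have htrans : ∀ s s' : List.Vector Bool n, ∃ q : ℕ, ap (δ ^ q) s.1 = s'.1 := by
    intro s s'
    have hls : s.1.length = n := s.2
    have hls' : s'.1.length = n := s'.2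
    have hlen : (w ++ s.1).length = w.length + n := by
      simp [List.length_append, hls]
    have hgt : w.length < (w ++ s.1).length := by omega
    have hpre : (w ++ s.1).take w.length = ap (γ ^ 0) w := by
      rw [pow_zero, ap_one, List.take_left]
    have hpre' : (w ++ s'.1).take w.length = ap (γ ^ 0) w := by
      rw [pow_zero, ap_one, List.take_left]
    obtain ⟨_, htr⟩ := hstab (w ++ s.1) hgt ⟨0, hpre⟩
    have hlen' : (w ++ s'.1).length = (w ++ s.1).length := by
      simp [List.length_append, hls, hls']
    obtain ⟨j, hj⟩ := htr (w ++ s'.1) hlen' ⟨0, hpre'⟩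
    have hwfix : ap (γ ^ j) w = w := by
      have h1 := ap_take (γ ^ j) w s.1
      rw [hj, List.take_left] at h1
      exact h1.symm
    obtain ⟨q, hq⟩ := k_dvd_of_fix γ w k hk hfix hmin j hwfix
    refine ⟨q, ?_⟩
    rw [hq, pow_mul] at hj
    rw [ap_pow_sec (γ ^ k) w hfix q s.1] at hj
    exact List.append_cancel_left hj
  -- transitivity at the level of `levelPerm`
  have hkey : ∀ s s' : List.Vector Bool n, ∃ q : ℕ, ((levelPerm n δ) ^ q) s = s' := by
    intro s s'
    obtain ⟨q, hq⟩ := htrans s s'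
    refine ⟨q, ?_⟩
    have hpow : (levelPerm n δ) ^ q = levelPerm n (δ ^ q) := by
      have := map_pow (levelHom n) δ q
      exact this.symm
    rw [hpow]
    exact Subtype.ext hq
  -- two distinct vertices at level n
  obtain ⟨m, rfl⟩ : ∃ m, n = m + 1 := ⟨n - 1, by omega⟩
  set a : List.Vector Bool (m + 1) := ⟨List.replicate (m + 1) true, by simp⟩ with ha
  set b : List.Vector Bool (m + 1) := ⟨List.replicate (m + 1) false, by simp⟩ with hb
  have hab : a ≠ b := by
    intro h
    have := congrArg (fun v : List.Vector Bool (m + 1) => v.1) h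
    simp [ha, hb, List.replicate_succ] at this
  set π := levelPerm (m + 1) δ with hπ
  have hmove : ∀ y : List.Vector Bool (m + 1), π y ≠ y := by
    intro y hy
    have hfixpow : ∀ q : ℕ, (π ^ q) y = y := by
      intro q
      induction q with
      | zero => simp
      | succ q ih => rw [pow_succ, Equiv.Perm.mul_apply, hy, ih]
    by_cases h : y = a
    · obtain ⟨q, hq⟩ := hkey y b
      exact hab (by rw [← h, ← hfixpow q, hq])
    · obtain ⟨q, hq⟩ := hkey y a
      exact h (by rw [← hfixpow q, hq])
  constructor
  · refine ⟨a, hmove a, fun z _ => ?_⟩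
    obtain ⟨q, hq⟩ := hkey a z
    exact ⟨(q : ℤ), by rw [zpow_natCast]; exact hq⟩
  · exact Finset.eq_univ_iff_forall.2 fun y => Equiv.Perm.mem_support.2 (hmove y)

end BinTree
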